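/- Let A be a unital *-algebra, Φ : A → ℂ a positive Hermitian linear map with associated seminorm ‖a‖_Φ = Φ(a*a)^{1/2}, and f ∈ A. If a sequence (g_n) in A is ‖·‖_Φ-convergent to ĝ ∈ A and (f g_n) is a ‖·‖_Φ-Cauchy sequence, then (f g_n) is ‖·‖_Φ-convergent to f ĝ. -/

import Mathlib

open scoped ComplexOrder
/-- The Hilbert seminorm associated with a positive Hermitian linear functional. -/
noncomputable def phiSeminorm {A : Type*} [Ring A] [Algebra ℂ A] [StarRing A]
    (Φ : A →ₗ[ℂ] ℂ) (a : A) : ℝ :=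
  Real.sqrt (Φ (star a * a)).re

lemma phi_re_nonneg {A : Type*} [Ring A] [Algebra ℂ A] [StarRing A]
    (Φ : A →ₗ[ℂ] ℂ) (hpos : ∀ a : A, 0 ≤ Φ (star a * a)) (a : A) :
    0 ≤ (Φ (star a * a)).re := by
  have := hpos a
  rw [Complex.le_def] at this
  simpa using this.1

lemma phiSeminorm_nonneg {A : Type*} [Ring A] [Algebra ℂ A] [StarRing A]
    (Φ : A →ₗ[ℂ] ℂ) (a : A) : 0 ≤ phiSeminorm Φ a := Real.sqrt_nonneg _

lemma phiSeminorm_sq {A : Type*} [Ring A] [Algebra ℂ A] [StarRing A]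
    (Φ : A →ₗ[ℂ] ℂ) (hpos : ∀ a : A, 0 ≤ Φ (star a * a)) (a : A) :
    phiSeminorm Φ a ^ 2 = (Φ (star a * a)).re := by
  rw [phiSeminorm, Real.sq_sqrt (phi_re_nonneg Φ hpos a)]

/-- The pre-inner-product core associated to Φ. -/
noncomputable def phiCore {A : Type*} [Ring A] [Algebra ℂ A] [StarRing A] [StarModule ℂ A]
    (Φ : A →ₗ[ℂ] ℂ)
    (hherm : ∀ a : A, Φ (star a) = starRingEnd ℂ (Φ a))
    (hpos : ∀ a : A, 0 ≤ Φ (star a * a)) : PreInnerProductSpace.Core ℂ A where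
  inner x y := Φ (star x * y)
  conj_inner_symm x y := by
    show starRingEnd ℂ (Φ (star y * x)) = Φ (star x * y)
    rw [← hherm]
    congr 1
    simp [star_mul]
  re_inner_nonneg x := by simpa using phi_re_nonneg Φ hpos x
  add_left x y z := by
    show Φ (star (x + y) * z) = Φ (star x * z) + Φ (star y * z)
    rw [star_add, add_mul, map_add]
  smul_left x y r := by
    show Φ (star (r • x) * y) = starRingEnd ℂ r * Φ (star x * y)
    rw [star_smul, smul_mul_assoc, map_smul, smul_eq_mul]
    rfl

/-- Cauchy-Schwarz. -/
lemma phi_cauchy_schwarz {A : Type*} [Ring A] [Algebra ℂ A] [StarRing A] [StarModule ℂ A]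
    (Φ : A →ₗ[ℂ] ℂ)
    (hherm : ∀ a : A, Φ (star a) = starRingEnd ℂ (Φ a))
    (hpos : ∀ a : A, 0 ≤ Φ (star a * a)) (a b : A) :
    ‖Φ (star a * b)‖ ≤ phiSeminorm Φ a * phiSeminorm Φ b := by
  letI c : PreInnerProductSpace.Core ℂ A := phiCore Φ hherm hpos
  letI : Inner ℂ A := c.toInner
  have h := InnerProductSpace.Core.inner_mul_inner_self_le (𝕜 := ℂ) (F := A) a b
  have hinner : ∀ x y : A, (inner ℂ x y : ℂ) = Φ (star x * y) := fun _ _ => rfl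
  rw [hinner, hinner, hinner, hinner] at h
  have hba : ‖Φ (star b * a)‖ = ‖Φ (star a * b)‖ := by
    have : star (star a * b) = star b * a := by simp [star_mul]
    rw [← this, hherm]
    simp
  rw [hba] at h
  have h2 : ‖Φ (star a * b)‖ ^ 2 ≤ (Φ (star a * a)).re * (Φ (star b * b)).re := by
    simpa [sq, RCLike.re_to_complex] using h
  have := Real.sqrt_le_sqrt h2
  rwa [Real.sqrt_sq (norm_nonneg _), Real.sqrt_mul (phi_re_nonneg Φ hpos a),
    ← phiSeminorm, ← phiSeminorm] at this

theorem mul_convergence_of_cauchy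
    (A : Type*) [Ring A] [Algebra ℂ A] [StarRing A] [StarModule ℂ A]
    (Φ : A →ₗ[ℂ] ℂ)
    (hherm : ∀ a : A, Φ (star a) = starRingEnd ℂ (Φ a))
    (hpos : ∀ a : A, 0 ≤ Φ (star a * a))
    (f : A) (g : ℕ → A) (g' : A)
    (hconv : ∀ ε > (0 : ℝ), ∃ N, ∀ n ≥ N, phiSeminorm Φ (g n - g') ≤ ε)
    (hcauchy : ∀ ε > (0 : ℝ), ∃ N, ∀ m ≥ N, ∀ n ≥ N,
      phiSeminorm Φ (f * g m - f * g n) ≤ ε) :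
    ∀ ε > (0 : ℝ), ∃ N, ∀ n ≥ N, phiSeminorm Φ (f * g n - f * g') ≤ ε := by
  intro ε hε
  obtain ⟨N, hN⟩ := hcauchy ε hε
  refine ⟨N, fun n hn => ?_⟩
  set u : A := f * g n - f * g' with hu
  set s : ℝ := phiSeminorm Φ u with hs
  have hs0 : 0 ≤ s := phiSeminorm_nonneg Φ u
  have key : s ^ 2 ≤ s * ε := by
    refine le_of_forall_pos_le_add fun δ hδ => ?_
    set C : ℝ := phiSeminorm Φ (star f * u) with hC
    have hC0 : 0 ≤ C := phiSeminorm_nonneg Φ _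
    obtain ⟨M, hM⟩ := hconv (δ / (C + 1)) (by positivity)
    set m : ℕ := max N M with hm
    have hmN : m ≥ N := le_max_left _ _
    have hmM : m ≥ M := le_max_right _ _
    have hdecomp : Φ (star u * u)
        = Φ (star u * (f * g n - f * g m)) + Φ (star u * (f * (g m - g'))) := by
      rw [← map_add, ← mul_add]
      congr 2
      rw [mul_sub, hu]
      abel
    have h1 : ‖Φ (star u * (f * g n - f * g m))‖ ≤ s * ε :=
      calc ‖Φ (star u * (f * g n - f * g m))‖
          ≤ s * phiSeminorm Φ (f * g n - f * g m) :=
            phi_cauchy_schwarz Φ hherm hpos u (f * g n - f * g m)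
        _ ≤ s * ε := mul_le_mul_of_nonneg_left (hN n hn m hmN) hs0
    have h2 : ‖Φ (star u * (f * (g m - g')))‖ ≤ δ := by
      have heq : star u * (f * (g m - g')) = star (star f * u) * (g m - g') := by
        simp [star_mul, mul_assoc]
      rw [heq]
      calc ‖Φ (star (star f * u) * (g m - g'))‖
          ≤ C * phiSeminorm Φ (g m - g') :=
            phi_cauchy_schwarz Φ hherm hpos (star f * u) (g m - g')
        _ ≤ C * (δ / (C + 1)) := mul_le_mul_of_nonneg_left (hM m hmM) hC0
        _ ≤ δ := by
            rw [div_eq_inv_mul, ← mul_assoc]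
            have h1 : C * (C + 1)⁻¹ ≤ 1 := by
              rw [mul_inv_le_iff₀ (by positivity)]
              linarith
            nlinarith
    calc s ^ 2 = (Φ (star u * u)).re := phiSeminorm_sq Φ hpos u
      _ = (Φ (star u * (f * g n - f * g m))).re + (Φ (star u * (f * (g m - g')))).re := by
          rw [hdecomp]; simp
      _ ≤ ‖Φ (star u * (f * g n - f * g m))‖ + ‖Φ (star u * (f * (g m - g')))‖ := by
          gcongr <;> exact Complex.re_le_norm _
      _ ≤ s * ε + δ := add_le_add h1 h2
  rcases eq_or_lt_of_le hs0 with h | h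
  · rw [← h]; exact le_of_lt hε
  · nlinarith [key]
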